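/- Let p > 1, let Λ ⊆ ℝ² be a critical lattice of D_p (an admissible lattice whose covolume equals Δ(D_p)), and let (P_x, P_y) ∈ Λ be a point with |P_x|^p + |P_y|^p = 1. If (u, v) ∈ ℝ² satisfies |P_x·v − P_y·u| = d(Λ) and |u|^p + |v|^p = 1, then (u, v) ∈ Λ. -/

import Mathlib

open scoped Pointwise

/-- The open Minkowski ball `D_p = {(x,y) : |x|^p + |y|^p < 1}` in `ℝ²`. -/
def ballD (p : ℝ) : Set (ℝ × ℝ) :=
  {v : ℝ × ℝ | |v.1| ^ p + |v.2| ^ p < 1}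

/-- The Minkowski curve `C_p = {(x,y) : |x|^p + |y|^p = 1}`, the boundary of `D_p`. -/
def curveC (p : ℝ) : Set (ℝ × ℝ) :=
  {v : ℝ × ℝ | |v.1| ^ p + |v.2| ^ p = 1}

/-- The lattice (ℤ-span) generated by two vectors `a b : ℝ²`. -/
def latticeSet (a b : ℝ × ℝ) : Set (ℝ × ℝ) :=
  {v : ℝ × ℝ | ∃ m n : ℤ, v = (m : ℝ) • a + (n : ℝ) • b}

/-- The determinant of the 2×2 matrix with rows `a` and `b`. -/
def det2 (a b : ℝ × ℝ) : ℝ := a.1 * b.2 - a.2 * b.1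

/-- A lattice with basis `a, b` is admissible for `D` if it meets `D` at most in `0`. -/
def IsAdmissible (D : Set (ℝ × ℝ)) (a b : ℝ × ℝ) : Prop :=
  latticeSet a b ∩ D ⊆ {0}

/-- The critical determinant `Δ(D)`: the infimum of covolumes `|det(a,b)|` over all
full-rank lattices `ℤa + ℤb` admissible for `D` (with value `∞` if none exists). -/
noncomputable def criticalDet (D : Set (ℝ × ℝ)) : ENNReal :=
  sInf {d : ENNReal | ∃ a b : ℝ × ℝ, LinearIndependent ℝ ![a, b] ∧
    IsAdmissible D a b ∧ d = ENNReal.ofReal |det2 a b|}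

noncomputable def Fq (p : ℝ) (P Q : ℝ × ℝ) (z : ℝ × ℝ) : ℝ :=
  |z.1 * P.1 + z.2 * Q.1| ^ p + |z.1 * P.2 + z.2 * Q.2| ^ p



lemma abs_rpow_cx {p : ℝ} (hp : 1 ≤ p) (x y a b : ℝ) (ha : 0 ≤ a) (hb : 0 ≤ b)
    (hab : a + b = 1) : |a * x + b * y| ^ p ≤ a * |x| ^ p + b * |y| ^ p := by
  have h1 : |a * x + b * y| ≤ a * |x| + b * |y| := by
    calc |a * x + b * y| ≤ |a * x| + |b * y| := abs_add_le _ _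
    _ = a * |x| + b * |y| := by rw [abs_mul, abs_mul, abs_of_nonneg ha, abs_of_nonneg hb]
  have h2 : |a * x + b * y| ^ p ≤ (a * |x| + b * |y|) ^ p :=
    Real.rpow_le_rpow (abs_nonneg _) h1 (by linarith)
  have h3 := (convexOn_rpow hp).2 (Set.mem_Ici.2 (abs_nonneg x)) (Set.mem_Ici.2 (abs_nonneg y)) ha hb hab
  simp only [smul_eq_mul] at h3
  linarith

lemma abs_rpow_scx {p : ℝ} (hp : 1 < p) {x y : ℝ} (hxy : x ≠ y) {a b : ℝ} (ha : 0 < a)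
    (hb : 0 < b) (hab : a + b = 1) : |a * x + b * y| ^ p < a * |x| ^ p + b * |y| ^ p := by
  rcases eq_or_ne |x| |y| with h | h
  · -- x = -y, y ≠ 0
    have hx0 : x = -y := by
      rcases abs_eq_abs.1 h with h' | h'
      · exact absurd h' hxy
      · exact h'
    have hy0 : y ≠ 0 := by rintro rfl; simp [hx0] at hxy
    have hlt : |a * x + b * y| < |y| := by
      rw [hx0]
      have : a * (-y) + b * y = (b - a) * y := by ring
      rw [this, abs_mul]
      have hba : |b - a| < 1 := by rw [abs_lt]; constructor <;> linarith
      have : |y| > 0 := abs_pos.2 hy0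
      nlinarith
    have := Real.rpow_lt_rpow (abs_nonneg _) hlt (by linarith : (0:ℝ) < p)
    have hxy' : |x| ^ p = |y| ^ p := by rw [h]
    have key : a * |x| ^ p + b * |y| ^ p = |y| ^ p := by
      rw [hxy']; linear_combination |y| ^ p * hab
    linarith
  · have h3 := (strictConvexOn_rpow hp).2 (Set.mem_Ici.2 (abs_nonneg x)) (Set.mem_Ici.2 (abs_nonneg y)) h ha hb hab
    simp only [smul_eq_mul] at h3
    have h1 : |a * x + b * y| ≤ a * |x| + b * |y| := by
      calc |a * x + b * y| ≤ |a * x| + |b * y| := abs_add_le _ _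
      _ = a * |x| + b * |y| := by rw [abs_mul, abs_mul, abs_of_nonneg ha.le, abs_of_nonneg hb.le]
    have h2 : |a * x + b * y| ^ p ≤ (a * |x| + b * |y|) ^ p :=
      Real.rpow_le_rpow (abs_nonneg _) h1 (by linarith)
    linarith

lemma Fq_cx {p : ℝ} (hp : 1 ≤ p) (P Q : ℝ × ℝ) (x1 y1 x2 y2 a b : ℝ) (ha : 0 ≤ a)
    (hb : 0 ≤ b) (hab : a + b = 1) :
    Fq p P Q (a * x1 + b * x2, a * y1 + b * y2) ≤
      a * Fq p P Q (x1, y1) + b * Fq p P Q (x2, y2) := by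
  unfold Fq
  simp only
  have e1 : (a * x1 + b * x2) * P.1 + (a * y1 + b * y2) * Q.1
      = a * (x1 * P.1 + y1 * Q.1) + b * (x2 * P.1 + y2 * Q.1) := by ring
  have e2 : (a * x1 + b * x2) * P.2 + (a * y1 + b * y2) * Q.2
      = a * (x1 * P.2 + y1 * Q.2) + b * (x2 * P.2 + y2 * Q.2) := by ring
  rw [e1, e2]
  have h1 := abs_rpow_cx hp (x1 * P.1 + y1 * Q.1) (x2 * P.1 + y2 * Q.1) a b ha hb hab
  have h2 := abs_rpow_cx hp (x1 * P.2 + y1 * Q.2) (x2 * P.2 + y2 * Q.2) a b ha hb hab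
  linarith

lemma Fq_scx {p : ℝ} (hp : 1 < p) {P Q : ℝ × ℝ} (hD : det2 P Q ≠ 0)
    {x1 y1 x2 y2 : ℝ} (hne : (x1, y1) ≠ (x2, y2)) {a b : ℝ} (ha : 0 < a)
    (hb : 0 < b) (hab : a + b = 1) :
    Fq p P Q (a * x1 + b * x2, a * y1 + b * y2) <
      a * Fq p P Q (x1, y1) + b * Fq p P Q (x2, y2) := by
  unfold Fq
  simp only
  have e1 : (a * x1 + b * x2) * P.1 + (a * y1 + b * y2) * Q.1
      = a * (x1 * P.1 + y1 * Q.1) + b * (x2 * P.1 + y2 * Q.1) := by ring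
  have e2 : (a * x1 + b * x2) * P.2 + (a * y1 + b * y2) * Q.2
      = a * (x1 * P.2 + y1 * Q.2) + b * (x2 * P.2 + y2 * Q.2) := by ring
  rw [e1, e2]
  have hdiff : x1 * P.1 + y1 * Q.1 ≠ x2 * P.1 + y2 * Q.1 ∨
      x1 * P.2 + y1 * Q.2 ≠ x2 * P.2 + y2 * Q.2 := by
    by_contra hcon
    push_neg at hcon
    obtain ⟨c1, c2⟩ := hcon
    apply hne
    have hx : (x1 - x2) * det2 P Q = 0 := by
      unfold det2; linear_combination Q.2 * c1 - Q.1 * c2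
    have hy : (y1 - y2) * det2 P Q = 0 := by
      unfold det2; linear_combination (-P.2) * c1 + P.1 * c2
    have hx' : x1 = x2 := by
      have := mul_eq_zero.1 hx
      rcases this with h | h
      · linarith
      · exact absurd h hD
    have hy' : y1 = y2 := by
      have := mul_eq_zero.1 hy
      rcases this with h | h
      · linarith
      · exact absurd h hD
    rw [hx', hy']
  rcases hdiff with h | h
  · have h1 := abs_rpow_scx hp h ha hb hab
    have h2 := abs_rpow_cx hp.le (x1 * P.2 + y1 * Q.2) (x2 * P.2 + y2 * Q.2) a b ha.le hb.le hab
    linarith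
  · have h1 := abs_rpow_cx hp.le (x1 * P.1 + y1 * Q.1) (x2 * P.1 + y2 * Q.1) a b ha.le hb.le hab
    have h2 := abs_rpow_scx hp h ha hb hab
    linarith

lemma Fq_smul (p : ℝ) (P Q : ℝ × ℝ) (t x y : ℝ) :
    Fq p P Q (t * x, t * y) = |t| ^ p * Fq p P Q (x, y) := by
  unfold Fq
  simp only
  have e1 : t * x * P.1 + t * y * Q.1 = t * (x * P.1 + y * Q.1) := by ring
  have e2 : t * x * P.2 + t * y * Q.2 = t * (x * P.2 + y * Q.2) := by ring
  rw [e1, e2, abs_mul, abs_mul, Real.mul_rpow (abs_nonneg _) (abs_nonneg _),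
    Real.mul_rpow (abs_nonneg _) (abs_nonneg _)]
  ring

lemma Fq_neg (p : ℝ) (P Q : ℝ × ℝ) (x y : ℝ) :
    Fq p P Q (-x, -y) = Fq p P Q (x, y) := by
  have := Fq_smul p P Q (-1) x y
  simp only [neg_one_mul] at this
  rw [this, abs_neg, abs_one, Real.one_rpow, one_mul]

lemma Fq_cont {p : ℝ} (hp0 : 0 ≤ p) (P Q : ℝ × ℝ) : Continuous (Fq p P Q) := by
  apply Continuous.add
  · exact (((continuous_fst.mul continuous_const).add
      (continuous_snd.mul continuous_const)).abs).rpow_const (fun x => Or.inr hp0)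
  · exact (((continuous_fst.mul continuous_const).add
      (continuous_snd.mul continuous_const)).abs).rpow_const (fun x => Or.inr hp0)

lemma Fq_bound {p : ℝ} (hp0 : 0 < p) {P Q : ℝ × ℝ} (hD : det2 P Q ≠ 0) {z : ℝ × ℝ}
    (hz : Fq p P Q z ≤ 1) :
    |z.1| ≤ (|Q.1| + |Q.2|) / |det2 P Q| ∧ |z.2| ≤ (|P.1| + |P.2|) / |det2 P Q| := by
  set w1 := z.1 * P.1 + z.2 * Q.1 with hw1
  set w2 := z.1 * P.2 + z.2 * Q.2 with hw2
  have hn1 : (0:ℝ) ≤ |w1| ^ p := Real.rpow_nonneg (abs_nonneg _) p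
  have hn2 : (0:ℝ) ≤ |w2| ^ p := Real.rpow_nonneg (abs_nonneg _) p
  have hb1 : |w1| ≤ 1 := by
    by_contra hcon
    push_neg at hcon
    have : 1 < |w1| ^ p := by
      rw [Real.one_lt_rpow_iff_of_pos (by linarith)]
      exact Or.inl ⟨hcon, hp0⟩
    unfold Fq at hz
    simp only [← hw1, ← hw2] at hz
    linarith
  have hb2 : |w2| ≤ 1 := by
    by_contra hcon
    push_neg at hcon
    have : 1 < |w2| ^ p := by
      rw [Real.one_lt_rpow_iff_of_pos (by linarith)]
      exact Or.inl ⟨hcon, hp0⟩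
    unfold Fq at hz
    simp only [← hw1, ← hw2] at hz
    linarith
  have hdet : (0:ℝ) < |det2 P Q| := abs_pos.2 hD
  constructor
  · have hcr : z.1 * det2 P Q = w1 * Q.2 - w2 * Q.1 := by
      unfold det2; rw [hw1, hw2]; ring
    have : |z.1| * |det2 P Q| = |w1 * Q.2 - w2 * Q.1| := by
      rw [← abs_mul, hcr]
    have hle : |w1 * Q.2 - w2 * Q.1| ≤ |Q.1| + |Q.2| := by
      calc |w1 * Q.2 - w2 * Q.1| ≤ |w1 * Q.2| + |w2 * Q.1| := abs_sub _ _
      _ = |w1| * |Q.2| + |w2| * |Q.1| := by rw [abs_mul, abs_mul]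
      _ ≤ 1 * |Q.2| + 1 * |Q.1| := by
          apply add_le_add <;> apply mul_le_mul_of_nonneg_right <;> first | assumption | exact abs_nonneg _
      _ = |Q.1| + |Q.2| := by ring
    rw [le_div_iff₀ hdet]
    linarith
  · have hcr : z.2 * det2 P Q = w2 * P.1 - w1 * P.2 := by
      unfold det2; rw [hw1, hw2]; ring
    have : |z.2| * |det2 P Q| = |w2 * P.1 - w1 * P.2| := by
      rw [← abs_mul, hcr]
    have hle : |w2 * P.1 - w1 * P.2| ≤ |P.1| + |P.2| := by
      calc |w2 * P.1 - w1 * P.2| ≤ |w2 * P.1| + |w1 * P.2| := abs_sub _ _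
      _ = |w2| * |P.1| + |w1| * |P.2| := by rw [abs_mul, abs_mul]
      _ ≤ 1 * |P.1| + 1 * |P.2| := by
          apply add_le_add <;> apply mul_le_mul_of_nonneg_right <;> first | assumption | exact abs_nonneg _
      _ = |P.1| + |P.2| := by ring
    rw [le_div_iff₀ hdet]
    linarith

lemma core {p : ℝ} (hp : 1 < p) {P Q : ℝ × ℝ} (hD : det2 P Q ≠ 0)
    (adm : ∀ m n : ℤ, ¬(m = 0 ∧ n = 0) → 1 ≤ Fq p P Q ((m : ℝ), (n : ℝ)))
    (hP1 : Fq p P Q (1, 0) = 1)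
    {σ : ℝ} (hσ0 : 0 < σ) (hσ1 : σ < 1) (hσN : Fq p P Q (σ, 1) = 1)
    (crit : ∀ s ε : ℝ, 0 < ε → ε < 1 →
      (∀ m n : ℤ, ¬(m = 0 ∧ n = 0) → 1 ≤ Fq p P Q ((m : ℝ) + (n : ℝ) * s, (n : ℝ) * (1 - ε))) →
      False) :
    False := by
  have hp0 : (0:ℝ) < p := by linarith
  set F := Fq p P Q with hF
  -- the slice at height 1
  set S : Set ℝ := {τ | F (τ, 1) ≤ 1} with hS
  have hσS : σ ∈ S := by show F (σ, 1) ≤ 1; rw [hσN]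
  have hSne : S.Nonempty := ⟨σ, hσS⟩
  have hSbd : ∀ τ ∈ S, |τ| ≤ (|Q.1| + |Q.2|) / |det2 P Q| := by
    intro τ hτ
    have := (Fq_bound hp0 hD (z := (τ, 1)) hτ).1
    exact this
  have hBddA : BddAbove S := by
    refine ⟨(|Q.1| + |Q.2|) / |det2 P Q|, fun τ hτ => ?_⟩
    have := hSbd τ hτ
    exact le_trans (le_abs_self τ) this
  have hBddB : BddBelow S := by
    refine ⟨-((|Q.1| + |Q.2|) / |det2 P Q|), fun τ hτ => ?_⟩
    have := hSbd τ hτ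
    have := neg_abs_le τ
    linarith [abs_le.1 (hSbd τ hτ)]
  have hScl : IsClosed S := by
    have : S = (fun τ : ℝ => F (τ, 1)) ⁻¹' Set.Iic 1 := rfl
    rw [this]
    exact IsClosed.preimage ((Fq_cont hp0.le P Q).comp (continuous_id.prodMk continuous_const))
      isClosed_Iic
  set A := sInf S with hA
  set B := sSup S with hB
  have hAS : A ∈ S := hScl.csInf_mem hSne hBddB
  have hBS : B ∈ S := hScl.csSup_mem hSne hBddA
  have hAσ : A ≤ σ := csInf_le hBddB hσS
  have hσB : σ ≤ B := le_csSup hBddA hσS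
  -- strict interior points of [A,B] have F < 1
  have hstrict : ∀ τ : ℝ, A < τ → τ < B → F (τ, 1) < 1 := by
    intro τ h1 h2
    obtain ⟨s1, hs1S, hs1⟩ := exists_lt_of_csInf_lt hSne h1
    obtain ⟨s2, hs2S, hs2⟩ := exists_lt_of_lt_csSup hSne h2
    have hden : 0 < s2 - s1 := by linarith
    set lam := (s2 - τ) / (s2 - s1) with hlam
    set mu := (τ - s1) / (s2 - s1) with hmu
    have hlampos : 0 < lam := div_pos (by linarith) hden
    have hmupos : 0 < mu := div_pos (by linarith) hden
    have hsum : lam + mu = 1 := by rw [hlam, hmu]; field_simp; ring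
    have hpt : lam * s1 + mu * s2 = τ := by rw [hlam, hmu]; field_simp; ring
    have hne : ((s1 : ℝ), (1:ℝ)) ≠ ((s2 : ℝ), (1:ℝ)) := by
      intro hcon
      have : s1 = s2 := congrArg Prod.fst hcon
      linarith
    have hkey := Fq_scx hp hD hne hlampos hmupos hsum
    rw [← hF] at hkey
    have hpt2 : lam * 1 + mu * 1 = 1 := by linarith
    rw [hpt, hpt2] at hkey
    calc F (τ, 1) < lam * F (s1, 1) + mu * F (s2, 1) := hkey
    _ ≤ lam * 1 + mu * 1 := by
        apply add_le_add <;> apply mul_le_mul_of_nonneg_left <;>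
          first | exact hs1S | exact hs2S | exact hlampos.le | exact hmupos.le
    _ = 1 := by linarith
  have hnoint : ∀ m : ℤ, ¬(A < (m:ℝ) ∧ (m:ℝ) < B) := by
    rintro m ⟨h1, h2⟩
    have h3 := hstrict m h1 h2
    have h4 := adm m 1 (by simp)
    push_cast at h4
    linarith
  have hA0 : 0 ≤ A := by
    by_contra hcon
    push_neg at hcon
    exact hnoint 0 (by constructor <;> [exact_mod_cast hcon; exact_mod_cast lt_of_lt_of_le hσ0 hσB])
  have hB1 : B ≤ 1 := by
    by_contra hcon
    push_neg at hcon
    exact hnoint 1 (by constructor <;> [exact_mod_cast lt_of_le_of_lt hAσ hσ1; exact_mod_cast hcon])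
  clear_value A B
  rcases eq_or_lt_of_le (by linarith : B - A ≤ 1) with hcase | hcase
  · -- B - A = 1 forces A = 0, B = 1, and σ interior: contradiction
    have hA' : A = 0 := by linarith [hAσ, hσB]
    have hB' : B = 1 := by linarith
    have := hstrict σ (by rw [hA']; exact hσ0) (by rw [hB']; exact hσ1)
    rw [hσN] at this
    exact lt_irrefl _ this
  · -- B - A < 1 : build a smaller admissible lattice
    set γ := (1 - (B - A)) / 4 with hγdef
    have hγ : 0 < γ := by rw [hγdef]; linarith
    have hγ4 : 1 - (B - A) = 4 * γ := by rw [hγdef]; ring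
    clear_value γ
    -- membership of (w,0) for |w| ≤ 1
    have hmem0 : ∀ w : ℝ, |w| ≤ 1 → F (w, 0) ≤ 1 := by
      intro w hw
      have := Fq_smul p P Q w 1 0
      rw [mul_one, mul_zero, ← hF] at this
      rw [this, hP1, mul_one]
      exact Real.rpow_le_one (abs_nonneg _) hw hp0.le
    have hFm1 : F (-1, 0) = 1 := by
      have := Fq_neg p P Q 1 0
      rw [← hF, neg_zero] at this
      rw [this, hP1]
    -- key convexity estimates for high points
    have hup : ∀ x η : ℝ, 1 ≤ η → F (x, η) ≤ 1 →
        (1/η) * x + (1 - 1/η) ≤ B ∧ A ≤ (1/η) * x - (1 - 1/η) := by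
      intro x η hη hFx
      have hηpos : 0 < η := by linarith
      have hlam0 : 0 < 1/η := by positivity
      have hlam1 : 1/η ≤ 1 := by rw [div_le_one hηpos]; linarith
      have hsum : 1/η + (1 - 1/η) = 1 := by ring
      constructor
      · have hcx := Fq_cx hp.le P Q x η 1 0 (1/η) (1 - 1/η) hlam0.le (by linarith) hsum
        rw [← hF] at hcx
        have e1 : (1/η) * η + (1 - 1/η) * 0 = 1 := by field_simp; ring
        rw [e1] at hcx
        have hle : F ((1/η) * x + (1 - 1/η) * 1, 1) ≤ 1 := by
          calc F ((1/η) * x + (1 - 1/η) * 1, 1) ≤ (1/η) * F (x, η) + (1 - 1/η) * F (1, 0) := hcx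
          _ ≤ (1/η) * 1 + (1 - 1/η) * 1 := by
              apply add_le_add
              · exact mul_le_mul_of_nonneg_left hFx hlam0.le
              · rw [hP1]
          _ = 1 := by ring
        have hmem : (1/η) * x + (1 - 1/η) * 1 ∈ S := hle
        have hfin := le_csSup hBddA hmem
        rw [← hB] at hfin
        linarith [hfin]
      · have hcx := Fq_cx hp.le P Q x η (-1) 0 (1/η) (1 - 1/η) hlam0.le (by linarith) hsum
        rw [← hF] at hcx
        have e1 : (1/η) * η + (1 - 1/η) * 0 = 1 := by field_simp; ring
        rw [e1] at hcx
        have hle : F ((1/η) * x + (1 - 1/η) * (-1), 1) ≤ 1 := by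
          calc F ((1/η) * x + (1 - 1/η) * (-1), 1) ≤ (1/η) * F (x, η) + (1 - 1/η) * F (-1, 0) := hcx
          _ ≤ (1/η) * 1 + (1 - 1/η) * 1 := by
              apply add_le_add
              · exact mul_le_mul_of_nonneg_left hFx hlam0.le
              · rw [hFm1]
          _ = 1 := by ring
        have hmem : (1/η) * x + (1 - 1/η) * (-1) ∈ S := hle
        have hfin := csInf_le hBddB hmem
        rw [← hA] at hfin
        linarith [hfin]
    have hxB : ∀ x η : ℝ, 1 ≤ η → F (x, η) ≤ 1 → x ≤ B := by
      intro x η hη hFx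
      have h1 := (hup x η hη hFx).1
      have hηpos : 0 < η := by linarith
      have hx' : (1/η) * x ≤ B - (1 - 1/η) := by linarith
      have hmul := mul_le_mul_of_nonneg_left hx' hηpos.le
      have e : η * ((1/η) * x) = x := by field_simp
      have e2 : η * (B - (1 - 1/η)) = η * B - η + 1 := by field_simp; ring
      nlinarith [mul_nonneg (by linarith : (0:ℝ) ≤ η - 1) (by linarith : (0:ℝ) ≤ 1 - B)]
    have hxA : ∀ x η : ℝ, 1 ≤ η → F (x, η) ≤ 1 → A ≤ x := by
      intro x η hη hFx
      have h2 := (hup x η hη hFx).2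
      have hηpos : 0 < η := by linarith
      have hx' : A + (1 - 1/η) ≤ (1/η) * x := by linarith
      have hmul := mul_le_mul_of_nonneg_left hx' hηpos.le
      have e : η * ((1/η) * x) = x := by field_simp
      have e2 : η * (A + (1 - 1/η)) = η * A + η - 1 := by field_simp; ring
      nlinarith [mul_nonneg (by linarith : (0:ℝ) ≤ η - 1) hA0]
    have hη2 : ∀ x η : ℝ, 1 ≤ η → F (x, η) ≤ 1 → 2 * (1 - 1/η) ≤ B - A := by
      intro x η hη hFx
      have h1 := (hup x η hη hFx).1
      have h2 := (hup x η hη hFx).2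
      linarith
    -- closedness / boundedness machinery
    have hclFle : IsClosed {z : ℝ × ℝ | F z ≤ 1} := by
      have : {z : ℝ × ℝ | F z ≤ 1} = F ⁻¹' Set.Iic 1 := rfl
      rw [this]; exact IsClosed.preimage (Fq_cont hp0.le P Q) isClosed_Iic
    have hbd : ∀ (T : Set (ℝ × ℝ)), T ⊆ {z : ℝ × ℝ | F z ≤ 1} → Bornology.IsBounded T := by
      intro T hT
      have hsub : T ⊆ Set.Icc
          (-((|Q.1| + |Q.2|) / |det2 P Q|), -((|P.1| + |P.2|) / |det2 P Q|))
          (((|Q.1| + |Q.2|) / |det2 P Q|), ((|P.1| + |P.2|) / |det2 P Q|)) := by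
        intro z hz
        have hb := Fq_bound hp0 hD (hT hz)
        have h1 := abs_le.1 hb.1
        have h2 := abs_le.1 hb.2
        exact ⟨⟨h1.1, h2.1⟩, ⟨h1.2, h2.2⟩⟩
      exact (Metric.isBounded_Icc _ _).subset hsub
    -- the right bad region
    obtain ⟨cp, hcp1, hcp⟩ : ∃ c : ℝ, c < 1 ∧
        ∀ z : ℝ × ℝ, F z ≤ 1 → B + γ ≤ z.1 → 1/2 ≤ z.2 → z.2 ≤ c := by
      set Bad : Set (ℝ × ℝ) := ({z : ℝ × ℝ | F z ≤ 1} ∩ {z : ℝ × ℝ | B + γ ≤ z.1}) ∩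
        {z : ℝ × ℝ | 1/2 ≤ z.2} with hBadDef
      have hBadcl : IsClosed Bad :=
        (hclFle.inter (isClosed_le continuous_const continuous_fst)).inter
          (isClosed_le continuous_const continuous_snd)
      have hBadcp : IsCompact Bad := Metric.isCompact_of_isClosed_isBounded hBadcl
        (hbd Bad (fun z hz => hz.1.1))
      rcases Set.eq_empty_or_nonempty Bad with he | hne
      · refine ⟨1/2, by norm_num, fun z h1 h2 h3 => ?_⟩
        have hz : z ∈ Bad := ⟨⟨h1, h2⟩, h3⟩
        rw [he] at hz
        exact absurd hz (Set.notMem_empty z)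
      · obtain ⟨z0, hz0, hmax⟩ := hBadcp.exists_isMaxOn hne continuous_snd.continuousOn
        refine ⟨z0.2, ?_, fun z h1 h2 h3 => (isMaxOn_iff.1 hmax) z ⟨⟨h1, h2⟩, h3⟩⟩
        by_contra hcon
        push_neg at hcon
        have hF0 : F (z0.1, z0.2) ≤ 1 := hz0.1.1
        have := hxB z0.1 z0.2 hcon hF0
        have h2 := hz0.1.2
        simp only [Set.mem_setOf_eq] at h2
        linarith
    -- the left bad region
    obtain ⟨cm, hcm1, hcm⟩ : ∃ c : ℝ, c < 1 ∧
        ∀ z : ℝ × ℝ, F z ≤ 1 → z.1 ≤ A - γ → 1/2 ≤ z.2 → z.2 ≤ c := by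
      set Bad : Set (ℝ × ℝ) := ({z : ℝ × ℝ | F z ≤ 1} ∩ {z : ℝ × ℝ | z.1 ≤ A - γ}) ∩
        {z : ℝ × ℝ | 1/2 ≤ z.2} with hBadDef
      have hBadcl : IsClosed Bad :=
        (hclFle.inter (isClosed_le continuous_fst continuous_const)).inter
          (isClosed_le continuous_const continuous_snd)
      have hBadcp : IsCompact Bad := Metric.isCompact_of_isClosed_isBounded hBadcl
        (hbd Bad (fun z hz => hz.1.1))
      rcases Set.eq_empty_or_nonempty Bad with he | hne
      · refine ⟨1/2, by norm_num, fun z h1 h2 h3 => ?_⟩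
        have hz : z ∈ Bad := ⟨⟨h1, h2⟩, h3⟩
        rw [he] at hz
        exact absurd hz (Set.notMem_empty z)
      · obtain ⟨z0, hz0, hmax⟩ := hBadcp.exists_isMaxOn hne continuous_snd.continuousOn
        refine ⟨z0.2, ?_, fun z h1 h2 h3 => (isMaxOn_iff.1 hmax) z ⟨⟨h1, h2⟩, h3⟩⟩
        by_contra hcon
        push_neg at hcon
        have hF0 : F (z0.1, z0.2) ≤ 1 := hz0.1.1
        have := hxA z0.1 z0.2 hcon hF0
        have h2 := hz0.1.2
        simp only [Set.mem_setOf_eq] at h2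
        linarith
    -- choose the contraction parameter
    set Dd := 2 - (B - A) with hDdef
    have hD1 : 1 < Dd := by rw [hDdef]; linarith
    have hiD : 1/Dd < 1 := by rw [div_lt_one (by linarith)]; linarith
    have hiD0 : 0 < 1/Dd := by positivity
    clear_value Dd
    set ε := min (min ((1 - cp)/2) ((1 - cm)/2)) (min (1/4) ((1 - 1/Dd)/2)) with hεdef
    have hε0 : 0 < ε := by
      apply lt_min (lt_min (by linarith) (by linarith)) (lt_min (by norm_num) (by linarith))
    have hε14 : ε ≤ 1/4 := le_trans (min_le_right _ _) (min_le_left _ _)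
    have hε1 : ε < 1 := by linarith
    have hεcp : ε < 1 - cp :=
      lt_of_le_of_lt (le_trans (min_le_left _ _) (min_le_left _ _)) (by linarith)
    have hεcm : ε < 1 - cm :=
      lt_of_le_of_lt (le_trans (min_le_left _ _) (min_le_right _ _)) (by linarith)
    have hεD : ε ≤ (1 - 1/Dd)/2 := le_trans (min_le_right _ _) (min_le_right _ _)
    clear_value ε
    set s₀ := B + 2*γ with hs₀def
    clear_value s₀
    -- row 1 check
    have claim_row1 : ∀ m : ℤ, 1 ≤ F ((m:ℝ) + s₀, 1 - ε) := by
      intro m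
      by_contra hcon
      push_neg at hcon
      have hFle : F ((m:ℝ) + s₀, 1 - ε) ≤ 1 := hcon.le
      have hz2 : 1/2 ≤ 1 - ε := by linarith
      rcases le_or_gt (B + γ) ((m:ℝ) + s₀) with hx | hx
      · have := hcp ((m:ℝ) + s₀, 1 - ε) hFle hx hz2
        simp only at this
        linarith
      rcases le_or_gt ((m:ℝ) + s₀) (A - γ) with hx' | hx'
      · have := hcm ((m:ℝ) + s₀, 1 - ε) hFle hx' hz2
        simp only at this
        linarith
      rcases le_or_gt 0 m with hm | hm
      · have hm' : (0:ℝ) ≤ (m:ℝ) := by exact_mod_cast hm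
        rw [hs₀def] at hx
        linarith
      · have hmz : m ≤ -1 := by omega
        have hm' : (m:ℝ) ≤ -1 := by exact_mod_cast hmz
        rw [hs₀def] at hx'
        linarith [hγ4]
    -- rows |k| ≥ 2 check
    have claim_rowk : ∀ η x : ℝ, 2*(1-ε) ≤ η → 1 ≤ F (x, η) := by
      intro η x hη
      by_contra hcon
      push_neg at hcon
      have hη1 : 1 ≤ η := by linarith
      have h2 := hη2 x η hη1 hcon.le
      have hηpos : 0 < η := by linarith
      have e1 : Dd ≤ 2/η := by
        have e0 : 2 * (1 - 1/η) = 2 - 2*(1/η) := by ring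
        rw [e0] at h2
        rw [hDdef]
        have : 2*(1/η) = 2/η := by ring
        linarith [this ▸ h2]
      have e2 : Dd * η ≤ 2 := by
        rw [le_div_iff₀ hηpos] at e1
        linarith
      have e3 : 1 + 1/Dd ≤ 2*(1-ε) := by linarith
      have e4 : Dd * (1 + 1/Dd) ≤ Dd * η :=
        mul_le_mul_of_nonneg_left (le_trans e3 hη) (by linarith)
      have e5 : Dd * (1 + 1/Dd) = Dd + 1 := by field_simp
      linarith
    -- row 0 check
    have claim_row0 : ∀ m : ℤ, m ≠ 0 → 1 ≤ F ((m:ℝ), 0) := by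
      intro m hm
      have := Fq_smul p P Q (m:ℝ) 1 0
      rw [mul_one, mul_zero, ← hF] at this
      rw [this, hP1, mul_one]
      apply Real.one_le_rpow _ hp0.le
      rw [← Int.cast_abs]
      exact_mod_cast Int.one_le_abs hm
    -- apply criticality
    apply crit s₀ ε hε0 hε1
    intro m n hmn
    have main : ∀ m' n' : ℤ, 0 < n' → 1 ≤ F ((m':ℝ) + (n':ℝ)*s₀, (n':ℝ)*(1-ε)) := by
      intro m' n' hn'
      rcases eq_or_lt_of_le (Int.lt_iff_add_one_le.mp hn') with h1 | h2
      · have : n' = 1 := by omega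
        subst this
        push_cast
        rw [one_mul, one_mul]
        exact claim_row1 m'
      · have hn2 : (2:ℝ) ≤ (n':ℝ) := by exact_mod_cast h2
        apply claim_rowk
        have h0 : 0 ≤ 1 - ε := by linarith
        exact mul_le_mul_of_nonneg_right hn2 h0
    rcases lt_trichotomy n 0 with hn | hn | hn
    · have h := main (-m) (-n) (by omega)
      have hneg := Fq_neg p P Q (((-m : ℤ):ℝ) + ((-n : ℤ):ℝ)*s₀) (((-n : ℤ):ℝ)*(1-ε))
      rw [← hF] at hneg
      have epair : (((m:ℝ) + (n:ℝ) * s₀), ((n:ℝ) * (1 - ε))) =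
          (-(((-m : ℤ):ℝ) + ((-n : ℤ):ℝ)*s₀), -(((-n : ℤ):ℝ)*(1-ε))) := by
        rw [Prod.mk.injEq]
        constructor <;> push_cast <;> ring
      rw [epair, hneg]
      exact h
    · subst hn
      have hm : m ≠ 0 := fun h => hmn ⟨h, rfl⟩
      push_cast
      rw [zero_mul, zero_mul, add_zero]
      exact claim_row0 m hm
    · exact main m n hn

lemma det2_pair_li {x y : ℝ × ℝ} (h : det2 x y ≠ 0) : LinearIndependent ℝ ![x, y] := by
  rw [LinearIndependent.pair_iff]
  intro s t hst
  have h1 : s * x.1 + t * y.1 = 0 := by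
    have := congrArg Prod.fst hst
    simpa [smul_eq_mul] using this
  have h2 : s * x.2 + t * y.2 = 0 := by
    have := congrArg Prod.snd hst
    simpa [smul_eq_mul] using this
  constructor
  · by_contra hs
    apply h
    have hz : s * det2 x y = 0 := by
      simp only [det2]; linear_combination y.2 * h1 - y.1 * h2
    exact (mul_eq_zero.1 hz).resolve_left hs
  · by_contra ht
    apply h
    have hz : t * det2 x y = 0 := by
      simp only [det2]; linear_combination (-x.2) * h1 + x.1 * h2
    exact (mul_eq_zero.1 hz).resolve_left ht

lemma li_det2' {x y : ℝ × ℝ} (h : LinearIndependent ℝ ![x, y]) : det2 x y ≠ 0 := by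
  intro hdet
  rw [LinearIndependent.pair_iff] at h
  have hdet' : x.1 * y.2 - x.2 * y.1 = 0 := hdet
  have r1 := h y.2 (-x.2) (by
    apply Prod.ext <;> simp only [Prod.fst_add, Prod.snd_add, Prod.smul_fst, Prod.smul_snd,
      smul_eq_mul, Prod.fst_zero, Prod.snd_zero] <;> linarith)
  have r2 := h y.1 (-x.1) (by
    apply Prod.ext <;> simp only [Prod.fst_add, Prod.snd_add, Prod.smul_fst, Prod.smul_snd,
      smul_eq_mul, Prod.fst_zero, Prod.snd_zero] <;> linarith)
  have hx : x = 0 := by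
    apply Prod.ext <;> simp only [Prod.fst_zero, Prod.snd_zero]
    · have := r2.2; linarith
    · have := r1.2; linarith
  have := h 1 0 (by rw [hx]; simp)
  norm_num at this

lemma np_smul (p t x y : ℝ) : |t * x| ^ p + |t * y| ^ p = |t| ^ p * (|x| ^ p + |y| ^ p) := by
  rw [abs_mul, abs_mul, Real.mul_rpow (abs_nonneg _) (abs_nonneg _),
    Real.mul_rpow (abs_nonneg _) (abs_nonneg _), mul_add]

lemma det2_comb (a b : ℝ × ℝ) (m n r s : ℝ) :
    det2 ((m:ℝ) • a + n • b) (r • a + s • b) = (m * s - n * r) * det2 a b := by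
  simp only [det2, Prod.fst_add, Prod.snd_add, Prod.smul_fst, Prod.smul_snd, smul_eq_mul]
  ring

/-- let `Λ = ℤa + ℤb` be a critical lattice of `D_p` (admissible with
covolume `d(Λ) = |det2 a b| = Δ(D_p)`), and let `P ∈ Λ` lie on the Minkowski curve.
If `(u,v)` satisfies `|P.1·v - P.2·u| = d(Λ)` and `|u|^p + |v|^p = 1`,
then `(u,v) ∈ Λ`. -/
theorem stmt_10 (p : ℝ) (hp : 1 < p) (a b : ℝ × ℝ)
    (hab : LinearIndependent ℝ ![a, b])
    (hadm : IsAdmissible (ballD p) a b)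
    (hcrit : ENNReal.ofReal |det2 a b| = criticalDet (ballD p))
    (P : ℝ × ℝ) (hP : P ∈ latticeSet a b) (hPcurve : P ∈ curveC p)
    (u v : ℝ) (huv : |P.1 * v - P.2 * u| = |det2 a b|)
    (hcurve : (u, v) ∈ curveC p) :
    (u, v) ∈ latticeSet a b := by
  have hp0 : (0:ℝ) < p := by linarith
  have hd : det2 a b ≠ 0 := li_det2' hab
  obtain ⟨m₀, n₀, hP0⟩ := hP
  have hPN : |P.1| ^ p + |P.2| ^ p = 1 := hPcurve
  have hPne : P ≠ 0 := by
    intro h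
    rw [h] at hPN
    simp only [Prod.fst_zero, Prod.snd_zero, abs_zero] at hPN
    rw [Real.zero_rpow hp0.ne'] at hPN
    norm_num at hPN
  -- P is primitive
  have hg1 : Int.gcd m₀ n₀ = 1 := by
    have hg0 : Int.gcd m₀ n₀ ≠ 0 := by
      intro h
      rw [Int.gcd_eq_zero_iff] at h
      apply hPne
      rw [hP0, h.1, h.2]
      simp
    by_contra hgne
    set g : ℕ := Int.gcd m₀ n₀ with hgdef
    have hg2 : 2 ≤ (g:ℝ) := by
      have : 2 ≤ g := by omega
      exact_mod_cast this
    have hdvd1 : (g:ℤ) ∣ m₀ := Int.gcd_dvd_left m₀ n₀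
    have hdvd2 : (g:ℤ) ∣ n₀ := Int.gcd_dvd_right m₀ n₀
    have hm₁ : (g:ℤ) * (m₀ / (g:ℤ)) = m₀ := Int.mul_ediv_cancel' hdvd1
    have hn₁ : (g:ℤ) * (n₀ / (g:ℤ)) = n₀ := Int.mul_ediv_cancel' hdvd2
    set P' : ℝ × ℝ := ((m₀ / (g:ℤ) : ℤ):ℝ) • a + ((n₀ / (g:ℤ) : ℤ):ℝ) • b with hP'def
    have hP'mem : P' ∈ latticeSet a b := ⟨_, _, rfl⟩
    have hgR : ((g:ℕ):ℝ) ≠ 0 := by positivity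
    have hPP' : P = ((g:ℕ):ℝ) • P' := by
      rw [hP0, hP'def, smul_add, smul_smul, smul_smul]
      have e1 : ((g:ℕ):ℝ) * ((m₀ / (g:ℤ) : ℤ):ℝ) = (m₀:ℝ) := by exact_mod_cast congrArg (fun z : ℤ => (z:ℝ)) hm₁
      have e2 : ((g:ℕ):ℝ) * ((n₀ / (g:ℤ) : ℤ):ℝ) = (n₀:ℝ) := by exact_mod_cast congrArg (fun z : ℤ => (z:ℝ)) hn₁
      rw [e1, e2]
    have hP'eq : P' = (((g:ℕ):ℝ))⁻¹ • P := by
      rw [hPP', smul_smul, inv_mul_cancel₀ hgR, one_smul]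
    have hP'ball : P' ∈ ballD p := by
      show |P'.1| ^ p + |P'.2| ^ p < 1
      have c1 : P'.1 = (((g:ℕ):ℝ))⁻¹ * P.1 := by rw [hP'eq]; simp [smul_eq_mul]
      have c2 : P'.2 = (((g:ℕ):ℝ))⁻¹ * P.2 := by rw [hP'eq]; simp [smul_eq_mul]
      rw [c1, c2, np_smul p _ _ _, hPN, mul_one]
      apply Real.rpow_lt_one (abs_nonneg _) _ hp0
      rw [abs_of_pos (by positivity : (0:ℝ) < (((g:ℕ):ℝ))⁻¹)]
      rw [inv_lt_one_iff₀]
      right; linarith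
    have hP'0 : P' = 0 := hadm ⟨hP'mem, hP'ball⟩
    rw [hP'0, smul_zero] at hPP'
    exact hPne hPP'
  -- Bezout
  obtain ⟨u₀, v₀, huv₀⟩ : IsCoprime m₀ n₀ := Int.isCoprime_iff_gcd_eq_one.mpr hg1
  set Q0 : ℝ × ℝ := ((-v₀ : ℤ):ℝ) • a + ((u₀ : ℤ):ℝ) • b with hQ0def
  have hD0 : det2 P Q0 = det2 a b := by
    rw [hP0, hQ0def, det2_comb]
    have e : ((m₀:ℝ) * (u₀:ℝ) - (n₀:ℝ) * ((-v₀ : ℤ):ℝ)) = 1 := by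
      have := congrArg (fun z : ℤ => (z:ℝ)) huv₀
      push_cast at this ⊢
      linarith
    rw [e, one_mul]
  have hD0ne : det2 P Q0 ≠ 0 := by rw [hD0]; exact hd
  have hPQmem : ∀ m n : ℤ, ((m:ℝ) • P + (n:ℝ) • Q0) ∈ latticeSet a b := by
    intro m n
    refine ⟨m * m₀ + n * (-v₀), m * n₀ + n * u₀, ?_⟩
    rw [hP0, hQ0def]
    apply Prod.ext <;>
      simp only [Prod.fst_add, Prod.snd_add, Prod.smul_fst, Prod.smul_snd, smul_eq_mul] <;>
      push_cast <;> ring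
  -- the point (u,v) in lattice coordinates
  have habs : det2 P (u, v) = det2 P Q0 ∨ det2 P (u, v) = -det2 P Q0 := by
    apply abs_eq_abs.mp
    rw [hD0]
    show |P.1 * v - P.2 * u| = |det2 a b|
    exact huv
  obtain ⟨w, hwdet, hwN, hwlat⟩ : ∃ w : ℝ × ℝ, det2 P w = det2 P Q0 ∧
      (|w.1| ^ p + |w.2| ^ p = 1) ∧ (w ∈ latticeSet a b → (u, v) ∈ latticeSet a b) := by
    rcases habs with h | h
    · exact ⟨(u, v), h, hcurve, fun hw => hw⟩
    · refine ⟨(-u, -v), ?_, ?_, ?_⟩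
      · show P.1 * (-v) - P.2 * (-u) = det2 P Q0
        have h' : P.1 * v - P.2 * u = -det2 P Q0 := h
        linarith
      · show |(-u)| ^ p + |(-v)| ^ p = 1
        rw [abs_neg, abs_neg]; exact hcurve
      · rintro ⟨mm, nn, hmm⟩
        refine ⟨-mm, -nn, ?_⟩
        have h1 := congrArg Prod.fst hmm
        have h2 := congrArg Prod.snd hmm
        simp only [Prod.fst_add, Prod.snd_add, Prod.smul_fst, Prod.smul_snd, smul_eq_mul] at h1 h2
        apply Prod.ext <;>
          simp only [Prod.fst_add, Prod.snd_add, Prod.smul_fst, Prod.smul_snd, smul_eq_mul] <;>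
          push_cast at h1 h2 ⊢ <;> nlinarith [h1, h2]
  set τ : ℝ := det2 w Q0 / det2 P Q0 with hτdef
  have hw1 : w.1 = τ * P.1 + Q0.1 := by
    have e1 : w.1 * det2 P Q0 = det2 w Q0 * P.1 + det2 P w * Q0.1 := by
      simp only [det2]; ring
    rw [hwdet] at e1
    rw [hτdef]
    field_simp
    linear_combination e1
  have hw2 : w.2 = τ * P.2 + Q0.2 := by
    have e1 : w.2 * det2 P Q0 = det2 w Q0 * P.2 + det2 P w * Q0.2 := by
      simp only [det2]; ring
    rw [hwdet] at e1
    rw [hτdef]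
    field_simp
    linear_combination e1
  set k : ℤ := ⌊τ⌋ with hkdef
  set σ : ℝ := τ - k with hσdef
  have hσ0 : 0 ≤ σ := by
    rw [hσdef]; linarith [Int.floor_le τ]
  have hσ1 : σ < 1 := by
    rw [hσdef]; linarith [Int.lt_floor_add_one τ]
  set Q2 : ℝ × ℝ := Q0 + (k:ℝ) • P with hQ2def
  have hQ2c1 : Q2.1 = Q0.1 + (k:ℝ) * P.1 := by
    rw [hQ2def]; simp [smul_eq_mul]
  have hQ2c2 : Q2.2 = Q0.2 + (k:ℝ) * P.2 := by
    rw [hQ2def]; simp [smul_eq_mul]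
  have hD2 : det2 P Q2 = det2 P Q0 := by
    simp only [det2, hQ2c1, hQ2c2]; ring
  have hD2ne : det2 P Q2 ≠ 0 := by rw [hD2]; exact hD0ne
  -- admissibility in lattice coordinates
  have adm : ∀ m n : ℤ, ¬(m = 0 ∧ n = 0) → 1 ≤ Fq p P Q2 ((m:ℝ), (n:ℝ)) := by
    intro m n hmn
    by_contra hcon
    push_neg at hcon
    set z : ℝ × ℝ := ((m:ℝ) * P.1 + (n:ℝ) * Q2.1, (m:ℝ) * P.2 + (n:ℝ) * Q2.2) with hzdef
    have hzball : z ∈ ballD p := hcon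
    have hzmem : z ∈ latticeSet a b := by
      have e : z = ((m + n * k : ℤ):ℝ) • P + ((n : ℤ):ℝ) • Q0 := by
        rw [hzdef]
        apply Prod.ext <;>
          simp only [Prod.fst_add, Prod.snd_add, Prod.smul_fst, Prod.smul_snd, smul_eq_mul,
            hQ2c1, hQ2c2] <;> push_cast <;> ring
      rw [e]; exact hPQmem _ _
    have hz0 : z = 0 := hadm ⟨hzmem, hzball⟩
    have hz1 : (m:ℝ) * P.1 + (n:ℝ) * Q2.1 = 0 := congrArg Prod.fst hz0
    have hz2 : (m:ℝ) * P.2 + (n:ℝ) * Q2.2 = 0 := congrArg Prod.snd hz0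
    have hm0 : (m:ℝ) * det2 P Q2 = 0 := by
      simp only [det2]; linear_combination Q2.2 * hz1 - Q2.1 * hz2
    have hn0 : (n:ℝ) * det2 P Q2 = 0 := by
      simp only [det2]; linear_combination (-P.2) * hz1 + P.1 * hz2
    have hm' : m = 0 := by
      have := (mul_eq_zero.1 hm0).resolve_right hD2ne
      exact_mod_cast this
    have hn' : n = 0 := by
      have := (mul_eq_zero.1 hn0).resolve_right hD2ne
      exact_mod_cast this
    exact hmn ⟨hm', hn'⟩
  have hP1 : Fq p P Q2 (1, 0) = 1 := by
    show |1 * P.1 + 0 * Q2.1| ^ p + |1 * P.2 + 0 * Q2.2| ^ p = 1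
    rw [one_mul, one_mul, zero_mul, zero_mul, add_zero, add_zero]
    exact hPN
  -- the criticality hypothesis
  have crit : ∀ s ε : ℝ, 0 < ε → ε < 1 →
      (∀ m n : ℤ, ¬(m = 0 ∧ n = 0) →
        1 ≤ Fq p P Q2 ((m : ℝ) + (n : ℝ) * s, (n : ℝ) * (1 - ε))) → False := by
    intro s ε hε0 hε1 hadm'
    set b' : ℝ × ℝ := s • P + (1 - ε) • Q2 with hb'def
    have hb'c1 : b'.1 = s * P.1 + (1 - ε) * Q2.1 := by rw [hb'def]; simp [smul_eq_mul]
    have hb'c2 : b'.2 = s * P.2 + (1 - ε) * Q2.2 := by rw [hb'def]; simp [smul_eq_mul]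
    have hdetb' : det2 P b' = (1 - ε) * det2 P Q2 := by
      simp only [det2, hb'c1, hb'c2]; ring
    have hb'ne : det2 P b' ≠ 0 := by
      rw [hdetb']; exact mul_ne_zero (by linarith) hD2ne
    have hli' : LinearIndependent ℝ ![P, b'] := det2_pair_li hb'ne
    have hadm2 : IsAdmissible (ballD p) P b' := by
      rintro z ⟨⟨mm, nn, hz⟩, hzball⟩
      by_cases hmn : mm = 0 ∧ nn = 0
      · rw [hmn.1, hmn.2] at hz
        simp only [Int.cast_zero, zero_smul, add_zero, zero_add] at hz
        simp [hz]
      · exfalso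
        have h1 := hadm' mm nn hmn
        have e1 : ((mm:ℝ) + (nn:ℝ) * s) * P.1 + ((nn:ℝ) * (1 - ε)) * Q2.1 = z.1 := by
          rw [hz]
          simp only [Prod.fst_add, Prod.smul_fst, smul_eq_mul, hb'c1]
          ring
        have e2 : ((mm:ℝ) + (nn:ℝ) * s) * P.2 + ((nn:ℝ) * (1 - ε)) * Q2.2 = z.2 := by
          rw [hz]
          simp only [Prod.snd_add, Prod.smul_snd, smul_eq_mul, hb'c2]
          ring
        have hlt : Fq p P Q2 ((mm:ℝ) + (nn:ℝ) * s, (nn:ℝ) * (1 - ε)) < 1 := by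
          show |((mm:ℝ) + (nn:ℝ) * s) * P.1 + ((nn:ℝ) * (1 - ε)) * Q2.1| ^ p +
            |((mm:ℝ) + (nn:ℝ) * s) * P.2 + ((nn:ℝ) * (1 - ε)) * Q2.2| ^ p < 1
          rw [e1, e2]
          exact hzball
        linarith
    have hmem : ENNReal.ofReal |det2 P b'| ∈ {d : ENNReal | ∃ a b : ℝ × ℝ,
        LinearIndependent ℝ ![a, b] ∧ IsAdmissible (ballD p) a b ∧
        d = ENNReal.ofReal |det2 a b|} := ⟨P, b', hli', hadm2, rfl⟩
    have hle : criticalDet (ballD p) ≤ ENNReal.ofReal |det2 P b'| := sInf_le hmem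
    rw [← hcrit] at hle
    have hlt2 : ENNReal.ofReal |det2 P b'| < ENNReal.ofReal |det2 a b| := by
      rw [hdetb', hD2, hD0, abs_mul, abs_of_pos (by linarith : (0:ℝ) < 1 - ε)]
      apply (ENNReal.ofReal_lt_ofReal_iff (abs_pos.2 hd)).2
      nlinarith [abs_pos.2 hd]
    exact absurd hle (not_le.2 hlt2)
  -- conclude
  rcases eq_or_lt_of_le hσ0 with hσeq | hσpos
  · -- τ is an integer
    have hτk : τ = (k:ℝ) := by rw [hσdef] at hσeq; linarith
    have hwmem : w ∈ latticeSet a b := by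
      have e : w = ((k : ℤ):ℝ) • P + ((1 : ℤ):ℝ) • Q0 := by
        apply Prod.ext <;>
          simp only [Prod.fst_add, Prod.snd_add, Prod.smul_fst, Prod.smul_snd, smul_eq_mul,
            Int.cast_one, one_mul, hw1, hw2, hτk] <;> ring
      rw [e]; exact hPQmem k 1
    exact hwlat hwmem
  · -- σ ∈ (0,1): contradiction with criticality
    exfalso
    have hσN : Fq p P Q2 (σ, 1) = 1 := by
      show |σ * P.1 + 1 * Q2.1| ^ p + |σ * P.2 + 1 * Q2.2| ^ p = 1
      have e1 : σ * P.1 + 1 * Q2.1 = w.1 := by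
        rw [hw1, hQ2c1, hσdef]; ring
      have e2 : σ * P.2 + 1 * Q2.2 = w.2 := by
        rw [hw2, hQ2c2, hσdef]; ring
      rw [e1, e2]
      exact hwN
    exact core hp hD2ne adm hP1 hσpos hσ1 hσN crit
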